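/- A typical element K of the space 𝒞 has orthogonal projections of measure zero in every non-vertical direction; that is, the set of K ∈ 𝒞 such that for every unit vector u not parallel to (1,0) the orthogonal projection of K onto the line spanned by u has one-dimensional Lebesgue measure zero is residual in 𝒞. -/

import Mathlib

open MeasureTheory Set Metric TopologicalSpace
open scoped ENNReal Real

noncomputable section

abbrev Plane : Type := EuclideanSpace ℝ (Fin 2)

/-- The point (a, b) of the plane. -/
def pt (a b : ℝ) : Plane := (WithLp.equiv 2 (Fin 2 → ℝ)).symm ![a, b]

/-- The orthogonal projection of `A` onto the line spanned by `u`, as a subset of `ℝ`. -/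
def orthProj (u : Plane) (A : Set Plane) : Set ℝ := (fun x => (inner ℝ x u : ℝ)) '' A

/-- The closed unit square `[0,1]²`. -/
def unitSq : Set Plane := {p | p 0 ∈ Icc (0:ℝ) 1 ∧ p 1 ∈ Icc (0:ℝ) 1}

/-- The space `𝒞` of nonempty compact subsets of `[0,1]²` whose projection to the x-axis is all
of `[0,1]`, with the Hausdorff distance. -/
def specialCompacts : Set (NonemptyCompacts Plane) :=
  {K | (K : Set Plane) ⊆ unitSq ∧ (fun p : Plane => p 0) '' (K : Set Plane) = Icc (0:ℝ) 1}

lemma pt_apply_zero (a b : ℝ) : pt a b 0 = a := by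
  simp [pt, WithLp.equiv_symm_apply]

lemma pt_apply_one (a b : ℝ) : pt a b 1 = b := by
  simp [pt, WithLp.equiv_symm_apply]

lemma inner_pt (a b : ℝ) (u : Plane) : (inner ℝ (pt a b) u : ℝ) = a * u 0 + b * u 1 := by
  rw [PiLp.inner_apply]
  simp [Fin.sum_univ_two, pt_apply_zero, pt_apply_one, RCLike.inner_apply]
  ring

lemma dist_pt_le (a b a' b' : ℝ) : dist (pt a b) (pt a' b') ≤ |a - a'| + |b - b'| := by
  have h0 : (0:ℝ) ≤ |a - a'| + |b - b'| := by positivity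
  rw [EuclideanSpace.dist_eq, Fin.sum_univ_two]
  simp only [Real.dist_eq, pt_apply_zero, pt_apply_one]
  have h1 : |a - a'| ^ 2 + |b - b'| ^ 2 ≤ (|a - a'| + |b - b'|) ^ 2 := by
    nlinarith [abs_nonneg (a - a'), abs_nonneg (b - b')]
  have h2 : Real.sqrt (|a - a'| ^ 2 + |b - b'| ^ 2) ≤ Real.sqrt ((|a - a'| + |b - b'|) ^ 2) :=
    Real.sqrt_le_sqrt h1
  rw [Real.sqrt_sq h0] at h2
  simpa [sq_abs] using h2

lemma abs_coord_le_norm (u : Plane) (i : Fin 2) : |u i| ≤ ‖u‖ := by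
  rw [EuclideanSpace.norm_eq]
  rw [show |u i| = Real.sqrt (u i ^ 2) by rw [Real.sqrt_sq_eq_abs]]
  apply Real.sqrt_le_sqrt
  fin_cases i <;> · rw [Fin.sum_univ_two] <;> simp [sq_abs] <;> nlinarith [sq_nonneg (u 0), sq_nonneg (u 1)]

lemma norm_sq_coords (u : Plane) : u 0 ^ 2 + u 1 ^ 2 = ‖u‖ ^ 2 := by
  rw [EuclideanSpace.norm_eq, Real.sq_sqrt (by positivity)]
  rw [Fin.sum_univ_two]
  simp [sq_abs]

/-! ### Segments and configurations -/

def seg (w s : ℝ) (q : ℝ × ℝ) : Set Plane :=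
  (fun t => pt (q.1 + t) (q.2 + s * t)) '' Icc 0 w

def confSet (w s : ℝ) (l : List (ℝ × ℝ)) : Set Plane := ⋃ q ∈ l, seg w s q

lemma mem_confSet {w s : ℝ} {l : List (ℝ × ℝ)} {z : Plane} :
    z ∈ confSet w s l ↔ ∃ q ∈ l, ∃ t ∈ Icc (0:ℝ) w, z = pt (q.1 + t) (q.2 + s * t) := by
  simp only [confSet, mem_iUnion, seg, mem_image]
  constructor
  · rintro ⟨q, hq, t, ht, rfl⟩; exact ⟨q, hq, t, ht, rfl⟩
  · rintro ⟨q, hq, t, ht, rfl⟩; exact ⟨q, hq, t, ht, rfl⟩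

lemma seg_isCompact (w s : ℝ) (q : ℝ × ℝ) : IsCompact (seg w s q) := by
  apply IsCompact.image isCompact_Icc
  have : Continuous fun t : ℝ => (![q.1 + t, q.2 + s * t] : Fin 2 → ℝ) := by
    apply continuous_pi
    intro i
    fin_cases i <;> simp <;> fun_prop
  have h2 : Continuous fun t : ℝ => pt (q.1 + t) (q.2 + s * t) := by
    simp only [pt]
    exact (PiLp.continuousLinearEquiv 2 ℝ (fun _ : Fin 2 => ℝ)).symm.continuous.comp this
  exact h2

lemma confSet_isCompact (w s : ℝ) (l : List (ℝ × ℝ)) : IsCompact (confSet w s l) := by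
  have : confSet w s l = ⋃ q ∈ l.toFinset, seg w s q := by
    simp only [confSet, List.mem_toFinset]
  rw [this]
  exact l.toFinset.isCompact_biUnion (fun q _ => seg_isCompact w s q)

lemma confSet_nonempty {w s : ℝ} {l : List (ℝ × ℝ)} (hw : 0 ≤ w)
    (h : Icc (0:ℝ) 1 ⊆ ⋃ q ∈ l, Icc q.1 (q.1 + w)) : (confSet w s l).Nonempty := by
  have h0 := h (left_mem_Icc.2 zero_le_one)
  simp only [Set.mem_iUnion, exists_prop] at h0
  obtain ⟨q, hq, -⟩ := h0
  exact ⟨pt (q.1 + 0) (q.2 + s * 0), mem_confSet.2 ⟨q, hq, 0, ⟨le_refl _, hw⟩, rfl⟩⟩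

/-- x-projection of a configuration. -/
lemma confSet_xproj {w s : ℝ} {l : List (ℝ × ℝ)} (hw : 0 ≤ w)
    (hcov : Icc (0:ℝ) 1 ⊆ ⋃ q ∈ l, Icc q.1 (q.1 + w))
    (hx : ∀ q ∈ l, 0 ≤ q.1 ∧ q.1 + w ≤ 1) :
    (fun p : Plane => p 0) '' confSet w s l = Icc (0:ℝ) 1 := by
  apply Subset.antisymm
  · rintro x ⟨z, hz, rfl⟩
    obtain ⟨q, hq, t, ht, rfl⟩ := mem_confSet.1 hz
    simp only [pt_apply_zero]
    obtain ⟨h1, h2⟩ := hx q hq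
    exact ⟨by linarith [ht.1], by linarith [ht.2]⟩
  · intro x hx'
    have h0 := hcov hx'
    simp only [Set.mem_iUnion, exists_prop] at h0
    obtain ⟨q, hq, hxq⟩ := h0
    refine ⟨pt (q.1 + (x - q.1)) (q.2 + s * (x - q.1)), mem_confSet.2 ⟨q, hq, x - q.1,
      ⟨by linarith [hxq.1], by linarith [hxq.2]⟩, rfl⟩, by simp [pt_apply_zero]⟩

lemma confSet_subset_unitSq {w s : ℝ} {l : List (ℝ × ℝ)} {μ : ℝ} (hμ0 : 0 ≤ μ) (hμ1 : μ ≤ 1/2)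
    (hx : ∀ q ∈ l, 0 ≤ q.1 ∧ q.1 + w ≤ 1)
    (hy : ∀ q ∈ l, ∀ t ∈ Icc (0:ℝ) w, q.2 + s * t ∈ Icc μ (1 - μ)) :
    confSet w s l ⊆ unitSq := by
  intro z hz
  obtain ⟨q, hq, t, ht, rfl⟩ := mem_confSet.1 hz
  obtain ⟨h1, h2⟩ := hx q hq
  obtain ⟨h3, h4⟩ := hy q hq t ht
  constructor
  · rw [pt_apply_zero]; exact ⟨by linarith [ht.1], by linarith [ht.2]⟩
  · rw [pt_apply_one]; exact ⟨by linarith, by linarith⟩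

/-! ### Projection lemmas -/

lemma orthProj_mono (u : Plane) {A B : Set Plane} (h : A ⊆ B) : orthProj u A ⊆ orthProj u B :=
  image_mono h

lemma abs_inner_le_dist {u : Plane} (hu : ‖u‖ = 1) (p q : Plane) :
    |(inner ℝ p u : ℝ) - (inner ℝ q u : ℝ)| ≤ dist p q := by
  rw [← inner_sub_left]
  calc |(inner ℝ (p - q) u : ℝ)| ≤ ‖p - q‖ * ‖u‖ := abs_real_inner_le_norm _ _
    _ = dist p q := by rw [hu, mul_one, dist_eq_norm]

lemma orthProj_thickening_subset {u : Plane} (hu : ‖u‖ = 1) (η : ℝ) (A : Set Plane) :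
    orthProj u (thickening η A) ⊆ cthickening η (orthProj u A) := by
  rintro x ⟨p, hp, rfl⟩
  obtain ⟨z, hz, hd⟩ := mem_thickening_iff.1 hp
  exact mem_cthickening_of_dist_le _ (inner ℝ z u) _ _ ⟨z, hz, rfl⟩
    (le_trans (by rw [Real.dist_eq]; exact abs_inner_le_dist hu p z) hd.le)

lemma orthProj_near {u : Plane} (hu : ‖u‖ = 1) {A A' : Set Plane} {β : ℝ}
    (h : ∀ p ∈ A', ∃ p₂ ∈ A, dist p p₂ ≤ β) :
    orthProj u A' ⊆ cthickening β (orthProj u A) := by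
  rintro x ⟨p, hp, rfl⟩
  obtain ⟨p₂, hp₂, hd⟩ := h p hp
  exact mem_cthickening_of_dist_le _ (inner ℝ p₂ u) _ _ ⟨p₂, hp₂, rfl⟩
    (le_trans (by rw [Real.dist_eq]; exact abs_inner_le_dist hu p p₂) hd)

lemma orthProj_seg_subset {u : Plane} {w s Δ : ℝ} (hw : 0 ≤ w)
    (h : |u 0 + s * u 1| ≤ Δ) (q : ℝ × ℝ) :
    orthProj u (seg w s q) ⊆ closedBall (q.1 * u 0 + q.2 * u 1) (w * Δ) := by
  rintro x ⟨p, hp, rfl⟩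
  obtain ⟨t, ht, rfl⟩ := hp
  simp only [mem_closedBall, Real.dist_eq, inner_pt]
  have : (q.1 + t) * u 0 + (q.2 + s * t) * u 1 - (q.1 * u 0 + q.2 * u 1)
      = t * (u 0 + s * u 1) := by ring
  rw [this, abs_mul]
  have h0 : |t| ≤ w := by rw [abs_of_nonneg ht.1]; exact ht.2
  have hΔ0 : 0 ≤ Δ := le_trans (abs_nonneg _) h
  exact mul_le_mul h0 h (abs_nonneg _) hw

/-! ### Measure lemmas -/

lemma cthickening_biUnion_list {α β : Type*} [PseudoEMetricSpace α] (η : ℝ) (l : List β)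
    (f : β → Set α) :
    cthickening η (⋃ q ∈ l, f q) ⊆ ⋃ q ∈ l, cthickening η (f q) := by
  induction l with
  | nil => simp [Metric.cthickening_empty]
  | cons a l ih =>
    have : (⋃ q ∈ (a :: l), f q) = f a ∪ ⋃ q ∈ l, f q := by
      ext x; simp [List.mem_cons, or_and_right, exists_or]
    rw [this, Metric.cthickening_union]
    intro x hx
    rcases hx with hx | hx
    · exact Set.mem_biUnion (List.mem_cons_self) hx
    · obtain ⟨q, hq, hx⟩ := by simpa using ih hx
      exact Set.mem_biUnion (List.mem_cons_of_mem a hq) hx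

lemma volume_biUnion_list_le {β : Type*} (l : List β) (g : β → Set ℝ) (C : ℝ≥0∞)
    (h : ∀ q ∈ l, volume (g q) ≤ C) :
    volume (⋃ q ∈ l, g q) ≤ l.length * C := by
  induction l with
  | nil => simp
  | cons a l ih =>
    have he : (⋃ q ∈ (a :: l), g q) = g a ∪ ⋃ q ∈ l, g q := by
      ext x; simp [List.mem_cons, or_and_right, exists_or]
    rw [he]
    calc volume (g a ∪ ⋃ q ∈ l, g q) ≤ volume (g a) + volume (⋃ q ∈ l, g q) :=
          measure_union_le _ _
      _ ≤ C + l.length * C := add_le_add (h a (List.mem_cons_self))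
          (ih fun q hq => h q (List.mem_cons_of_mem a hq))
      _ = (a :: l).length * C := by
          rw [List.length_cons]
          push_cast
          rw [add_mul, one_mul, add_comm]

lemma volume_cthick_orthProj_le {u : Plane} {w s Δ η : ℝ} (hw : 0 ≤ w) (hη : 0 ≤ η)
    (l : List (ℝ × ℝ)) (h : |u 0 + s * u 1| ≤ Δ) :
    volume (cthickening η (orthProj u (confSet w s l)))
      ≤ l.length * ENNReal.ofReal (2 * (w * Δ + η)) := by
  have hΔ0 : 0 ≤ Δ := le_trans (abs_nonneg _) h
  have himg : orthProj u (confSet w s l) = ⋃ q ∈ l, orthProj u (seg w s q) := by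
    simp only [confSet, orthProj, image_iUnion]
  rw [himg]
  refine le_trans (measure_mono (cthickening_biUnion_list η l _)) ?_
  apply volume_biUnion_list_le
  intro q hq
  have h1 : cthickening η (orthProj u (seg w s q))
      ⊆ closedBall (q.1 * u 0 + q.2 * u 1) (η + w * Δ) := by
    refine le_trans (cthickening_subset_of_subset _ (orthProj_seg_subset hw h q)) ?_
    rw [cthickening_closedBall hη (by positivity)]
  refine le_trans (measure_mono h1) ?_
  rw [Real.volume_closedBall]
  exact ENNReal.ofReal_le_ofReal (by linarith)

/-! ### Subdivision decomposition -/

lemma exists_subdiv {w' : ℝ} (hw' : 0 < w') (M : ℕ) (hM : 0 < M) {t : ℝ}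
    (ht : t ∈ Icc 0 (M * w')) : ∃ j : ℕ, j < M ∧ t - j * w' ∈ Icc 0 w' := by
  have h0 : 0 ≤ t / w' := div_nonneg ht.1 hw'.le
  set jf := ⌊t / w'⌋₊ with hjf
  by_cases hcase : jf ≤ M - 1
  · refine ⟨jf, lt_of_le_of_lt hcase (Nat.pred_lt hM.ne'), ?_, ?_⟩
    · have h1 : (jf : ℝ) ≤ t / w' := Nat.floor_le h0
      have h2 : (jf : ℝ) * w' ≤ t := (le_div_iff₀ hw').1 h1
      linarith
    · have h2 : t / w' < jf + 1 := Nat.lt_floor_add_one _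
      have : t < (jf + 1) * w' := by
        rw [div_lt_iff₀ hw'] at h2
        linarith
      linarith
  · -- jf ≥ M, so t = M * w'; use j = M - 1
    push_neg at hcase
    have hM1 : (M : ℝ) ≤ jf := by
      have : M - 1 < jf := hcase
      have : M ≤ jf := by omega
      exact_mod_cast this
    have hjle : (jf : ℝ) ≤ t / w' := Nat.floor_le h0
    have htM : (M : ℝ) * w' ≤ t := by
      have : (M : ℝ) ≤ t / w' := le_trans hM1 hjle
      rw [le_div_iff₀ hw'] at this
      linarith
    have hteq : t = M * w' := le_antisymm ht.2 htM
    refine ⟨M - 1, Nat.pred_lt hM.ne', ?_, ?_⟩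
    · have : ((M - 1 : ℕ) : ℝ) = (M : ℝ) - 1 := by
        have : (1:ℕ) ≤ M := hM
        push_cast [Nat.cast_sub this]
        ring
      rw [this, hteq]
      nlinarith
    · have : ((M - 1 : ℕ) : ℝ) = (M : ℝ) - 1 := by
        have : (1:ℕ) ≤ M := hM
        push_cast [Nat.cast_sub this]
        ring
      rw [this, hteq]
      nlinarith

/-! ### The blind step -/

lemma blind_step {w s μ' : ℝ} {l : List (ℝ × ℝ)} (hw : 0 < w)
    (hcov : Icc (0:ℝ) 1 ⊆ ⋃ q ∈ l, Icc q.1 (q.1 + w))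
    (hx : ∀ q ∈ l, 0 ≤ q.1 ∧ q.1 + w ≤ 1)
    (hy : ∀ q ∈ l, ∀ t ∈ Icc (0:ℝ) w, q.2 + s * t ∈ Icc μ' (1 - μ'))
    (s' β : ℝ) (hβ : 0 < β) :
    ∃ (M : ℕ) (l' : List (ℝ × ℝ)), 0 < M ∧
      l'.length = l.length * M ∧
      (Icc (0:ℝ) 1 ⊆ ⋃ q ∈ l', Icc q.1 (q.1 + w / M)) ∧
      (∀ q ∈ l', 0 ≤ q.1 ∧ q.1 + w / M ≤ 1) ∧
      (∀ q ∈ l', ∀ t ∈ Icc (0:ℝ) (w / M), q.2 + s' * t ∈ Icc (μ' - β) (1 - (μ' - β))) ∧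
      (∀ p ∈ confSet (w / M) s' l', ∃ p₂ ∈ confSet w s l, dist p p₂ ≤ β) ∧
      (∀ p ∈ confSet w s l, ∃ p₂ ∈ confSet (w / M) s' l', dist p p₂ ≤ β) := by
  set M : ℕ := ⌈(|s - s'| * w) / β⌉₊ + 1 with hM
  have hM0 : 0 < M := Nat.succ_pos _
  have hMR : (0:ℝ) < M := by exact_mod_cast hM0
  set w' : ℝ := w / M with hw'
  have hw'0 : 0 < w' := div_pos hw hMR
  have hMw' : (M : ℝ) * w' = w := by rw [hw']; field_simp
  have hkey : |s - s'| * w' ≤ β := by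
    have h1 : (|s - s'| * w) / β ≤ M := by
      refine le_trans (Nat.le_ceil _) ?_
      exact_mod_cast Nat.le_succ _
    rw [div_le_iff₀ hβ] at h1
    rw [hw', ← mul_div_assoc, div_le_iff₀ hMR]
    linarith
  set l' : List (ℝ × ℝ) :=
    l.flatMap (fun q => (List.range M).map
      (fun j : ℕ => (q.1 + (j:ℝ) * w', q.2 + s * ((j:ℝ) * w')))) with hl'
  have hmem : ∀ q' : ℝ × ℝ, q' ∈ l' ↔
      ∃ q ∈ l, ∃ j : ℕ, j < M ∧ q' = (q.1 + (j:ℝ) * w', q.2 + s * ((j:ℝ) * w')) := by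
    intro q'
    constructor
    · intro h
      obtain ⟨q, hq, h2⟩ := List.mem_flatMap.1 h
      obtain ⟨j, hj, h3⟩ := List.mem_map.1 h2
      exact ⟨q, hq, j, List.mem_range.1 hj, h3.symm⟩
    · rintro ⟨q, hq, j, hj, rfl⟩
      exact List.mem_flatMap.2 ⟨q, hq, List.mem_map.2 ⟨j, List.mem_range.2 hj, rfl⟩⟩
  have hlen : l'.length = l.length * M := by
    rw [hl', List.length_flatMap]
    have : (List.map (List.length ∘ fun q : ℝ × ℝ => List.map
        (fun j : ℕ => (q.1 + (j:ℝ) * w', q.2 + s * ((j:ℝ) * w'))) (List.range M)) l)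
        = List.map (fun _ => M) l := by
      apply List.map_congr_left
      intro q _
      simp
    rw [show (List.map (fun a => (List.map (fun j : ℕ => (a.1 + (j:ℝ) * w', a.2 + s * ((j:ℝ) * w'))) (List.range M)).length) l) = List.map (fun _ => M) l from this]
    rw [List.map_const', List.sum_replicate, smul_eq_mul]
  refine ⟨M, l', hM0, hlen, ?_, ?_, ?_, ?_, ?_⟩
  · -- cover
    intro x hx'
    obtain ⟨q, hq, hxq⟩ := by
      have h0 := hcov hx'
      simp only [Set.mem_iUnion, exists_prop] at h0
      exact h0
    have ht : x - q.1 ∈ Icc (0:ℝ) ((M:ℝ) * w') := by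
      rw [hMw']
      exact ⟨by linarith [hxq.1], by linarith [hxq.2]⟩
    obtain ⟨j, hj, hj2⟩ := exists_subdiv hw'0 M hM0 ht
    refine Set.mem_biUnion (hmem _ |>.2 ⟨q, hq, j, hj, rfl⟩) ?_
    exact ⟨by simp; linarith [hj2.1], by simp; linarith [hj2.2]⟩
  · -- inX
    intro q' hq'
    obtain ⟨q, hq, j, hj, rfl⟩ := hmem _ |>.1 hq'
    obtain ⟨h1, h2⟩ := hx q hq
    have hjw : (0:ℝ) ≤ j * w' := by positivity
    have hjM : ((j:ℝ) + 1) * w' ≤ (M:ℝ) * w' := by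
      have : (j:ℝ) + 1 ≤ M := by exact_mod_cast hj
      nlinarith
    constructor
    · simp only []; linarith
    · simp only []
      have : q.1 + (j * w' + w') ≤ q.1 + w := by rw [← hMw']; nlinarith
      linarith
  · -- inY
    intro q' hq' t ht
    obtain ⟨q, hq, j, hj, rfl⟩ := hmem _ |>.1 hq'
    have hin : (j:ℝ) * w' + t ∈ Icc (0:ℝ) w := by
      constructor
      · have : (0:ℝ) ≤ j * w' := by positivity
        linarith [ht.1]
      · rw [← hMw']
        have : (j:ℝ) + 1 ≤ M := by exact_mod_cast hj
        nlinarith [ht.2]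
    have hold := hy q hq _ hin
    have hdev : |(s' - s) * t| ≤ β := by
      rw [abs_mul]
      have h1 : |t| ≤ w' := by rw [abs_of_nonneg ht.1]; exact ht.2
      calc |s' - s| * |t| ≤ |s' - s| * w' := by
            exact mul_le_mul_of_nonneg_left h1 (abs_nonneg _)
        _ = |s - s'| * w' := by rw [abs_sub_comm]
        _ ≤ β := hkey
    have heq : (q.2 + s * (j * w')) + s' * t = (q.2 + s * ((j:ℝ) * w' + t)) + (s' - s) * t := by
      ring
    have habs := abs_le.1 hdev
    constructor
    · simp only []; rw [heq]; linarith [hold.1]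
    · simp only []; rw [heq]; linarith [hold.2]
  · -- new points near old
    intro p hp
    obtain ⟨q', hq', t, ht, rfl⟩ := mem_confSet.1 hp
    obtain ⟨q, hq, j, hj, rfl⟩ := hmem _ |>.1 hq'
    have hin : (j:ℝ) * w' + t ∈ Icc (0:ℝ) w := by
      constructor
      · have : (0:ℝ) ≤ j * w' := by positivity
        linarith [ht.1]
      · rw [← hMw']
        have : (j:ℝ) + 1 ≤ M := by exact_mod_cast hj
        nlinarith [ht.2]
    refine ⟨pt (q.1 + ((j:ℝ) * w' + t)) (q.2 + s * ((j:ℝ) * w' + t)),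
      mem_confSet.2 ⟨q, hq, _, hin, rfl⟩, ?_⟩
    refine le_trans (dist_pt_le _ _ _ _) ?_
    have hx0 : (q.1 + (j:ℝ) * w' + t) - (q.1 + ((j:ℝ) * w' + t)) = 0 := by ring
    have hy0 : (q.2 + s * ((j:ℝ) * w') + s' * t) - (q.2 + s * ((j:ℝ) * w' + t))
        = (s' - s) * t := by ring
    rw [hx0, hy0, abs_zero, zero_add]
    rw [abs_mul]
    have h1 : |t| ≤ w' := by rw [abs_of_nonneg ht.1]; exact ht.2
    calc |s' - s| * |t| ≤ |s' - s| * w' := mul_le_mul_of_nonneg_left h1 (abs_nonneg _)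
      _ = |s - s'| * w' := by rw [abs_sub_comm]
      _ ≤ β := hkey
  · -- old points near new
    intro p hp
    obtain ⟨q, hq, t, ht, rfl⟩ := mem_confSet.1 hp
    have ht' : t ∈ Icc (0:ℝ) ((M:ℝ) * w') := by rw [hMw']; exact ht
    obtain ⟨j, hj, hj2⟩ := exists_subdiv hw'0 M hM0 ht'
    refine ⟨pt ((q.1 + (j:ℝ) * w') + (t - (j:ℝ) * w'))
      ((q.2 + s * ((j:ℝ) * w')) + s' * (t - (j:ℝ) * w')),
      mem_confSet.2 ⟨(q.1 + (j:ℝ) * w', q.2 + s * ((j:ℝ) * w')),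
        hmem _ |>.2 ⟨q, hq, j, hj, rfl⟩, t - (j:ℝ) * w', hj2, rfl⟩, ?_⟩
    refine le_trans (dist_pt_le _ _ _ _) ?_
    have hx0 : (q.1 + t) - ((q.1 + (j:ℝ) * w') + (t - (j:ℝ) * w')) = 0 := by ring
    have hy0 : (q.2 + s * t) - ((q.2 + s * ((j:ℝ) * w')) + s' * (t - (j:ℝ) * w'))
        = (s - s') * (t - (j:ℝ) * w') := by ring
    rw [hx0, hy0, abs_zero, zero_add, abs_mul]
    have h1 : |t - (j:ℝ) * w'| ≤ w' := by rw [abs_of_nonneg hj2.1]; exact hj2.2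
    calc |s - s'| * |t - (j:ℝ) * w'| ≤ |s - s'| * w' :=
          mul_le_mul_of_nonneg_left h1 (abs_nonneg _)
      _ ≤ β := hkey

lemma pt_eta (p : Plane) : pt (p 0) (p 1) = p := by
  ext i
  fin_cases i
  · exact pt_apply_zero _ _
  · exact pt_apply_one _ _

/-! ### Stage 0 : approximating an arbitrary element by a configuration -/

lemma stage_zero (K : Set Plane) (hKsub : K ⊆ unitSq)
    (hKx : (fun p : Plane => p 0) '' K = Icc (0:ℝ) 1)
    (N : ℕ) (hN : 2 ≤ N) :
    ∃ l : List (ℝ × ℝ),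
      (Icc (0:ℝ) 1 ⊆ ⋃ q ∈ l, Icc q.1 (q.1 + (N:ℝ)⁻¹)) ∧
      (∀ q ∈ l, 0 ≤ q.1 ∧ q.1 + (N:ℝ)⁻¹ ≤ 1) ∧
      (∀ q ∈ l, ∀ t ∈ Icc (0:ℝ) ((N:ℝ)⁻¹), q.2 + 0 * t ∈ Icc ((N:ℝ)⁻¹) (1 - (N:ℝ)⁻¹)) ∧
      ((l.length : ℝ) * (N:ℝ)⁻¹ ≤ N) ∧
      (∀ p ∈ confSet ((N:ℝ)⁻¹) 0 l, ∃ p₂ ∈ K, dist p p₂ ≤ 3 * (N:ℝ)⁻¹) ∧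
      (∀ p ∈ K, ∃ p₂ ∈ confSet ((N:ℝ)⁻¹) 0 l, dist p p₂ ≤ 3 * (N:ℝ)⁻¹) := by
  classical
  have hN0 : 0 < N := by omega
  have hNR : (0:ℝ) < N := by exact_mod_cast hN0
  set w₀ : ℝ := (N:ℝ)⁻¹ with hw₀
  have hw₀0 : 0 < w₀ := by positivity
  have hNw₀ : (N:ℝ) * w₀ = 1 := by rw [hw₀]; field_simp
  have hw₀half : w₀ ≤ 1 - w₀ := by
    have h2 : (2:ℝ) ≤ N := by exact_mod_cast hN
    rw [hw₀]
    rw [inv_le_iff_one_le_mul₀ hNR] at *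
    have : (2:ℝ) * (N:ℝ)⁻¹ ≤ 1 := by
      rw [mul_inv_le_iff₀ hNR]; linarith
    linarith
  set Q : ℕ → ℕ → Set Plane := fun i j =>
    {p : Plane | p 0 ∈ Icc ((i:ℝ)*w₀) (((i:ℝ)+1)*w₀) ∧ p 1 ∈ Icc ((j:ℝ)*w₀) (((j:ℝ)+1)*w₀)}
    with hQ
  set h : ℕ → ℝ := fun j => max ((j:ℝ)*w₀) w₀ with hh
  set l : List (ℝ × ℝ) := (List.range N).flatMap (fun i =>
    (List.range N).filterMap (fun j =>
      if (K ∩ Q i j).Nonempty then some ((i:ℝ) * w₀, h j) else none)) with hl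
  have hmem : ∀ q : ℝ × ℝ, q ∈ l ↔
      ∃ i : ℕ, i < N ∧ ∃ j : ℕ, j < N ∧ (K ∩ Q i j).Nonempty ∧ q = ((i:ℝ) * w₀, h j) := by
    intro q
    rw [hl]
    constructor
    · intro hq
      obtain ⟨i, hi, hq2⟩ := List.mem_flatMap.1 hq
      obtain ⟨j, hj, hq3⟩ := List.mem_filterMap.1 hq2
      by_cases hne : (K ∩ Q i j).Nonempty
      · rw [if_pos hne] at hq3
        exact ⟨i, List.mem_range.1 hi, j, List.mem_range.1 hj, hne, (Option.some_inj.1 hq3).symm⟩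
      · rw [if_neg hne] at hq3; cases hq3
    · rintro ⟨i, hi, j, hj, hne, rfl⟩
      refine List.mem_flatMap.2 ⟨i, List.mem_range.2 hi, ?_⟩
      exact List.mem_filterMap.2 ⟨j, List.mem_range.2 hj, by rw [if_pos hne]⟩
  have hhj : ∀ j : ℕ, j < N → h j ∈ Icc w₀ (1 - w₀) ∧ |h j - (j:ℝ)*w₀| ≤ w₀ := by
    intro j hj
    have hjN : (j:ℝ) ≤ (N:ℝ) - 1 := by
      have : (j:ℝ) + 1 ≤ N := by exact_mod_cast hj
      linarith
    have hup : (j:ℝ) * w₀ ≤ 1 - w₀ := by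
      have : ((N:ℝ) - 1) * w₀ = 1 - w₀ := by rw [sub_mul, hNw₀, one_mul]
      nlinarith
    constructor
    · constructor
      · exact le_max_right _ _
      · rw [hh]; simp only [max_le_iff]; exact ⟨hup, hw₀half⟩
    · rw [hh]
      simp only []
      rcases le_or_gt w₀ ((j:ℝ)*w₀) with hc | hc
      · rw [max_eq_left hc]; simpa using hw₀0.le
      · rw [max_eq_right hc.le]
        rw [abs_of_nonneg (by linarith)]
        have : (0:ℝ) ≤ (j:ℝ) * w₀ := by positivity
        linarith
  refine ⟨l, ?_, ?_, ?_, ?_, ?_, ?_⟩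
  · -- covers
    intro x hx
    have hx' : x ∈ Icc 0 ((N:ℝ) * w₀) := by rw [hNw₀]; exact hx
    obtain ⟨i, hi, hi2⟩ := exists_subdiv hw₀0 N hN0 hx'
    have hxb : (i:ℝ) * w₀ + w₀ / 2 ∈ Icc (0:ℝ) 1 := by
      constructor
      · positivity
      · have : ((i:ℝ) + 1) * w₀ ≤ (N:ℝ) * w₀ := by
          have : (i:ℝ) + 1 ≤ N := by exact_mod_cast hi
          nlinarith
        rw [hNw₀] at this
        linarith
    have : ∃ p ∈ K, p 0 = (i:ℝ) * w₀ + w₀ / 2 := by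
      have := hKx ▸ hxb
      obtain ⟨p, hp, hpx⟩ := this
      exact ⟨p, hp, hpx⟩
    obtain ⟨p, hpK, hpx⟩ := this
    have hp1 : p 1 ∈ Icc 0 ((N:ℝ) * w₀) := by rw [hNw₀]; exact (hKsub hpK).2
    obtain ⟨j, hj, hj2⟩ := exists_subdiv hw₀0 N hN0 hp1
    have hpQ : p ∈ K ∩ Q i j := by
      refine ⟨hpK, ⟨?_, ?_⟩, ⟨by linarith [hj2.1], by linarith [hj2.2]⟩⟩
      · rw [hpx]; linarith
      · rw [hpx]; linarith
    refine Set.mem_biUnion (hmem _ |>.2 ⟨i, hi, j, hj, ⟨p, hpQ⟩, rfl⟩) ?_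
    exact ⟨by simp; linarith [hi2.1], by simp; linarith [hi2.2]⟩
  · -- inX
    intro q hq
    obtain ⟨i, hi, j, hj, hne, rfl⟩ := hmem _ |>.1 hq
    constructor
    · simp only []; positivity
    · simp only []
      have : ((i:ℝ) + 1) * w₀ ≤ (N:ℝ) * w₀ := by
        have : (i:ℝ) + 1 ≤ N := by exact_mod_cast hi
        nlinarith
      rw [hNw₀] at this
      linarith
  · -- inY
    intro q hq t ht
    obtain ⟨i, hi, j, hj, hne, rfl⟩ := hmem _ |>.1 hq
    have := (hhj j hj).1
    simpa using this
  · -- mass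
    have hlen : l.length ≤ N * N := by
      rw [hl, List.length_flatMap]
      have hmap : ∀ x ∈ List.map (List.length ∘ fun i =>
          (List.range N).filterMap (fun j =>
            if (K ∩ Q i j).Nonempty then some ((i:ℝ) * w₀, h j) else none)) (List.range N),
          x ≤ N := by
        intro x hx
        obtain ⟨i, _, rfl⟩ := List.mem_map.1 hx
        simp only [Function.comp]
        exact le_trans (List.length_filterMap_le _ _) (by simp)
      calc _ ≤ (List.map _ (List.range N)).length • N := List.sum_le_card_nsmul _ _ hmap
        _ = N * N := by simp [smul_eq_mul]
    have : (l.length : ℝ) ≤ (N:ℝ) * N := by exact_mod_cast hlen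
    calc (l.length : ℝ) * w₀ ≤ ((N:ℝ) * N) * w₀ := by nlinarith
      _ = N := by rw [mul_assoc, hNw₀, mul_one]
  · -- conf → K
    intro p hp
    obtain ⟨q, hq, t, ht, rfl⟩ := mem_confSet.1 hp
    obtain ⟨i, hi, j, hj, hne, rfl⟩ := hmem _ |>.1 hq
    obtain ⟨p₂, hp₂K, hp₂Q⟩ := hne
    refine ⟨p₂, hp₂K, ?_⟩
    have : dist (pt ((i:ℝ)*w₀ + t) (h j + 0 * t)) p₂
        = dist (pt ((i:ℝ)*w₀ + t) (h j + 0 * t)) (pt (p₂ 0) (p₂ 1)) := by rw [pt_eta]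
    rw [this]
    refine le_trans (dist_pt_le _ _ _ _) ?_
    have hbx : |(i:ℝ)*w₀ + t - p₂ 0| ≤ w₀ := by
      obtain ⟨hb1, hb2⟩ := hp₂Q.1
      rw [abs_le]
      constructor <;> [skip; skip] <;> · simp only [] at hb1 hb2 ⊢; nlinarith [ht.1, ht.2]
    have hby : |h j + 0 * t - p₂ 1| ≤ 2 * w₀ := by
      obtain ⟨hb1, hb2⟩ := hp₂Q.2
      have := (hhj j hj).2
      rw [abs_le] at this ⊢
      constructor <;> · simp only [] at hb1 hb2 ⊢; nlinarith [this.1, this.2]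
    linarith
  · -- K → conf
    intro p hpK
    have hp0 : p 0 ∈ Icc 0 ((N:ℝ) * w₀) := by rw [hNw₀]; exact (hKsub hpK).1
    have hp1 : p 1 ∈ Icc 0 ((N:ℝ) * w₀) := by rw [hNw₀]; exact (hKsub hpK).2
    obtain ⟨i, hi, hi2⟩ := exists_subdiv hw₀0 N hN0 hp0
    obtain ⟨j, hj, hj2⟩ := exists_subdiv hw₀0 N hN0 hp1
    have hpQ : p ∈ K ∩ Q i j := by
      refine ⟨hpK, ⟨by linarith [hi2.1], by linarith [hi2.2]⟩,
        ⟨by linarith [hj2.1], by linarith [hj2.2]⟩⟩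
    refine ⟨pt ((i:ℝ)*w₀ + (p 0 - (i:ℝ)*w₀)) (h j + 0 * (p 0 - (i:ℝ)*w₀)),
      mem_confSet.2 ⟨((i:ℝ)*w₀, h j), hmem _ |>.2 ⟨i, hi, j, hj, ⟨p, hpQ⟩, rfl⟩,
        p 0 - (i:ℝ)*w₀, hi2, rfl⟩, ?_⟩
    have : dist p (pt ((i:ℝ)*w₀ + (p 0 - (i:ℝ)*w₀)) (h j + 0 * (p 0 - (i:ℝ)*w₀)))
        = dist (pt (p 0) (p 1)) (pt ((i:ℝ)*w₀ + (p 0 - (i:ℝ)*w₀)) (h j + 0 * (p 0 - (i:ℝ)*w₀))) := by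
      rw [pt_eta]
    rw [this]
    refine le_trans (dist_pt_le _ _ _ _) ?_
    have hbx : |p 0 - ((i:ℝ)*w₀ + (p 0 - (i:ℝ)*w₀))| = 0 := by
      rw [abs_eq_zero]; ring
    have hby : |p 1 - (h j + 0 * (p 0 - (i:ℝ)*w₀))| ≤ 2 * w₀ := by
      have := (hhj j hj).2
      rw [abs_le] at this ⊢
      constructor <;> · simp only []; nlinarith [this.1, this.2, hj2.1, hj2.2]
    linarith [hbx, hby]

/-! ### The net of slopes -/

lemma slope_net {Δ : ℝ} (hΔ : 0 < Δ) (c : ℝ) (hc : 0 ≤ c) {u : Plane} (hu : ‖u‖ = 1)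
    (hu1 : 1/(c+1) ≤ |u 1|) :
    ∃ j : ℕ, j < ⌈2*(c+1)/Δ⌉₊ + 1 ∧ |u 0 + (-(c+1) + (j:ℝ)*Δ) * u 1| ≤ Δ := by
  have hc1 : (0:ℝ) < c + 1 := by linarith
  have hb0 : (0:ℝ) < |u 1| := lt_of_lt_of_le (by positivity) hu1
  have hbne : u 1 ≠ 0 := fun h => by simp [h] at hb0
  have hble : |u 1| ≤ 1 := hu ▸ abs_coord_le_norm u 1
  have hale : |u 0| ≤ 1 := hu ▸ abs_coord_le_norm u 0
  set sstar : ℝ := -u 0 / u 1 with hsstar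
  have hsabs : |sstar| ≤ c + 1 := by
    rw [hsstar, abs_div, abs_neg]
    rw [div_le_iff₀ hb0]
    have h1 : 1 ≤ (c+1) * |u 1| := by
      rw [one_div] at hu1
      have := (inv_le_iff_one_le_mul₀ hc1).1 hu1
      linarith
    nlinarith
  set x : ℝ := (sstar + (c+1)) / Δ with hx
  have hx0 : 0 ≤ x := by
    apply div_nonneg _ hΔ.le
    have := abs_le.1 hsabs
    linarith [this.1]
  set j : ℕ := ⌊x⌋₊ with hj
  have hj1 : (j:ℝ) ≤ x := Nat.floor_le hx0
  have hj2 : x < j + 1 := Nat.lt_floor_add_one x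
  refine ⟨j, ?_, ?_⟩
  · have hxle : x ≤ 2*(c+1)/Δ := by
      rw [hx]
      gcongr
      linarith [(abs_le.1 hsabs).2]
    have : j ≤ ⌈2*(c+1)/Δ⌉₊ := le_trans (Nat.floor_le_floor hxle) (Nat.floor_le_ceil _)
    omega
  · have hd1 : (j:ℝ) * Δ ≤ sstar + (c+1) := by
      rw [hx] at hj1
      rw [← le_div_iff₀ hΔ]
      exact hj1
    have hd2 : sstar + (c+1) < ((j:ℝ) + 1) * Δ := by
      rw [hx] at hj2
      rw [← div_lt_iff₀ hΔ]
      exact hj2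
    have hnet : |(-(c+1) + (j:ℝ)*Δ) - sstar| ≤ Δ := by
      rw [abs_le]
      constructor <;> [linarith; linarith]
    have hkey : u 0 + (-(c+1) + (j:ℝ)*Δ) * u 1 = ((-(c+1) + (j:ℝ)*Δ) - sstar) * u 1 := by
      rw [hsstar]
      field_simp
      ring
    rw [hkey, abs_mul]
    calc |(-(c+1) + (j:ℝ)*Δ) - sstar| * |u 1| ≤ Δ * 1 :=
          mul_le_mul hnet hble (abs_nonneg _) hΔ.le
      _ = Δ := mul_one Δ

lemma nat_mul_ofReal_le {a : ℕ} {x y : ℝ} (hx : 0 ≤ x) (h : (a:ℝ) * x ≤ y) :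
    (a : ℝ≥0∞) * ENNReal.ofReal x ≤ ENNReal.ofReal y := by
  rw [← ENNReal.ofReal_natCast a, ← ENNReal.ofReal_mul (by positivity)]
  exact ENNReal.ofReal_le_ofReal h

/-! ### The density core -/

set_option maxHeartbeats 2000000 in
lemma density_core (K : Set Plane) (hKsub : K ⊆ unitSq)
    (hKx : (fun p : Plane => p 0) '' K = Icc (0:ℝ) 1)
    {ε : ℝ} (hε : 0 < ε) (n m : ℕ) :
    ∃ (w s η : ℝ) (l : List (ℝ × ℝ)), 0 < w ∧ 0 < η ∧
      (Icc (0:ℝ) 1 ⊆ ⋃ q ∈ l, Icc q.1 (q.1 + w)) ∧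
      (∀ q ∈ l, 0 ≤ q.1 ∧ q.1 + w ≤ 1) ∧
      (∃ μ' : ℝ, 0 ≤ μ' ∧ μ' ≤ 1/2 ∧
        ∀ q ∈ l, ∀ t ∈ Icc (0:ℝ) w, q.2 + s * t ∈ Icc μ' (1 - μ')) ∧
      (∀ p ∈ confSet w s l, ∃ p₂ ∈ K, dist p p₂ ≤ ε/2) ∧
      (∀ p ∈ K, ∃ p₂ ∈ confSet w s l, dist p p₂ ≤ ε/2) ∧
      (∀ u : Plane, ‖u‖ = 1 → 1/((n:ℝ)+1) ≤ |u 1| →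
        volume (cthickening η (orthProj u (confSet w s l)))
          ≤ ENNReal.ofReal (1/(2*((m:ℝ)+1)))) := by
  classical
  set N : ℕ := max 2 ⌈24/ε⌉₊ with hN
  have hN2 : 2 ≤ N := le_max_left _ _
  have hN0 : 0 < N := by omega
  have hNR : (0:ℝ) < N := by exact_mod_cast hN0
  have hNε : 24/ε ≤ N := by
    refine le_trans (Nat.le_ceil _) ?_
    exact_mod_cast le_max_right _ _
  have hw₀ε : 3 * ((N:ℝ))⁻¹ ≤ ε/8 := by
    have h24 : 24 ≤ (N:ℝ) * ε := by rwa [div_le_iff₀ hε] at hNε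
    rw [inv_eq_one_div, mul_one_div, div_le_div_iff₀ hNR (by norm_num)]
    nlinarith
  set Δ : ℝ := 1/(8*((m:ℝ)+1)*N) with hΔdef
  have hΔ0 : 0 < Δ := by rw [hΔdef]; positivity
  have hΔN : Δ * N = 1/(8*((m:ℝ)+1)) := by
    rw [hΔdef]; field_simp
  set slope : ℕ → ℝ := fun j => -((n:ℝ)+1) + (j:ℝ)*Δ with hslope
  -- the induction
  have IND : ∀ k : ℕ, ∃ (w s η μ' D : ℝ) (l : List (ℝ × ℝ)),
      0 < w ∧ 0 < η ∧ 0 < μ' ∧ μ' ≤ 1/2 ∧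
      (Icc (0:ℝ) 1 ⊆ ⋃ q ∈ l, Icc q.1 (q.1 + w)) ∧
      (∀ q ∈ l, 0 ≤ q.1 ∧ q.1 + w ≤ 1) ∧
      (∀ q ∈ l, ∀ t ∈ Icc (0:ℝ) w, q.2 + s * t ∈ Icc μ' (1 - μ')) ∧
      ((l.length : ℝ) * w ≤ N) ∧
      0 ≤ D ∧ D + ε/(8 * 2^k) ≤ ε/2 ∧
      (∀ p ∈ confSet w s l, ∃ p₂ ∈ K, dist p p₂ ≤ D) ∧
      (∀ p ∈ K, ∃ p₂ ∈ confSet w s l, dist p p₂ ≤ D) ∧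
      (∀ u : Plane, ‖u‖ = 1 → ∀ j : ℕ, j < k → |u 0 + slope j * u 1| ≤ Δ →
        volume (cthickening η (orthProj u (confSet w s l)))
          ≤ ENNReal.ofReal (1/(2*((m:ℝ)+1)))) := by
    intro k
    induction k with
    | zero =>
      obtain ⟨l, hcov, hx, hy, hmass, hCK, hKC⟩ := stage_zero K hKsub hKx N hN2
      have hw₀0 : (0:ℝ) < (N:ℝ)⁻¹ := by positivity
      refine ⟨(N:ℝ)⁻¹, 0, 1, (N:ℝ)⁻¹, 3 * (N:ℝ)⁻¹, l, hw₀0, one_pos, hw₀0, ?_, hcov, hx, hy,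
        hmass, by positivity, ?_, hCK, hKC, ?_⟩
      · -- (N)⁻¹ ≤ 1/2
        rw [inv_le_iff_one_le_mul₀ hNR]
        have : (2:ℝ) ≤ N := by exact_mod_cast hN2
        nlinarith
      · -- budget
        have : ε/(8 * 2^0) = ε/8 := by norm_num
        rw [this]
        linarith
      · intro u hu j hj
        exact absurd hj (Nat.not_lt_zero j)
    | succ k ih =>
      obtain ⟨w, s, η, μ', D, l, hw, hη, hμ', hμ'half, hcov, hx, hy, hmass, hD0, hDb,
        hCK, hKC, hΦ⟩ := ih
      set β : ℝ := min (η/2) (min (μ'/2) (ε/(16 * 2^k))) with hβdef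
      have hβ0 : 0 < β := by
        rw [hβdef]
        have h2k : (0:ℝ) < 2^k := by positivity
        refine lt_min (by linarith) (lt_min (by linarith) (by positivity))
      have hβη : β ≤ η/2 := min_le_left _ _
      have hβμ : β ≤ μ'/2 := le_trans (min_le_right _ _) (min_le_left _ _)
      have hβε : β ≤ ε/(16 * 2^k) := le_trans (min_le_right _ _) (min_le_right _ _)
      obtain ⟨M, l', hM0, hlen, hcov', hx', hy', hnear, hnear'⟩ :=
        blind_step hw hcov hx hy (slope k) β hβ0
      have hMR : (0:ℝ) < M := by exact_mod_cast hM0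
      set w' : ℝ := w / M with hw'def
      have hw'0 : 0 < w' := by rw [hw'def]; positivity
      set L : ℝ := (l'.length : ℝ) with hLdef
      have hL0 : (0:ℝ) ≤ L := by rw [hLdef]; positivity
      set η' : ℝ := min (η/2) (1/(16*((m:ℝ)+1)*(L+1))) with hη'def
      have hη'0 : 0 < η' := by
        rw [hη'def]
        refine lt_min (by linarith) (by positivity)
      have hη'2 : η' ≤ 1/(16*((m:ℝ)+1)*(L+1)) := min_le_right _ _
      have hη'η : η' ≤ η/2 := min_le_left _ _
      have hmass' : L * w' ≤ N := by
        have hcast : L = (l.length : ℝ) * M := by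
          rw [hLdef, hlen]; push_cast; ring
        rw [hcast, hw'def]
        have : (l.length : ℝ) * (M:ℝ) * (w / M) = (l.length : ℝ) * w := by
          field_simp
        rw [this]
        exact hmass
      refine ⟨w', slope k, η', μ' - β, D + β, l', hw'0, hη'0, by linarith, by linarith,
        hcov', hx', hy', hmass', by linarith, ?_, ?_, ?_, ?_⟩
      · -- budget
        have h2 : ε/(8 * 2^(k+1)) = ε/(16 * 2^k) := by
          rw [pow_succ]; ring_nf
        rw [h2]
        have h3 : ε/(16 * 2^k) + ε/(16 * 2^k) = ε/(8 * 2^k) := by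
          field_simp; ring
        linarith
      · -- conf' → K
        intro p hp
        obtain ⟨p₂, hp₂, hd₂⟩ := hnear p hp
        obtain ⟨p₃, hp₃, hd₃⟩ := hCK p₂ hp₂
        exact ⟨p₃, hp₃, le_trans (dist_triangle p p₂ p₃) (by linarith)⟩
      · -- K → conf'
        intro p hp
        obtain ⟨p₂, hp₂, hd₂⟩ := hKC p hp
        obtain ⟨p₃, hp₃, hd₃⟩ := hnear' p₂ hp₂
        exact ⟨p₃, hp₃, le_trans (dist_triangle p p₂ p₃) (by linarith)⟩
      · -- projections
        intro u hu j hj hju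
        rcases Nat.lt_succ_iff_lt_or_eq.1 hj with hj' | rfl
        · -- inherited
          have hsub1 : orthProj u (confSet w' (slope k) l')
              ⊆ cthickening β (orthProj u (confSet w s l)) :=
            orthProj_near hu hnear
          have hsub2 : cthickening η' (orthProj u (confSet w' (slope k) l'))
              ⊆ cthickening η (orthProj u (confSet w s l)) := by
            refine le_trans (cthickening_subset_of_subset _ hsub1) ?_
            refine le_trans (cthickening_cthickening_subset hη'0.le hβ0.le _) ?_
            exact cthickening_mono (by linarith) _
          exact le_trans (measure_mono hsub2) (hΦ u hu j hj' hju)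
        · -- new direction
          have hbound := volume_cthick_orthProj_le hw'0.le hη'0.le l' hju
          refine le_trans hbound ?_
          refine nat_mul_ofReal_le (by positivity) ?_
          have h1 : L * (2 * (w' * Δ + η')) = 2*Δ*(L*w') + 2*(L*η') := by ring
          have h2 : 2*Δ*(L*w') ≤ 2*(Δ*N) := by nlinarith
          have h3 : L*η' ≤ 1/(16*((m:ℝ)+1)) := by
            have hx1 : η' * (16*((m:ℝ)+1)*(L+1)) ≤ 1 := by
              rw [← le_div_iff₀ (by positivity : (0:ℝ) < 16*((m:ℝ)+1)*(L+1))]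
              exact hη'2
            rw [le_div_iff₀ (by positivity : (0:ℝ) < 16*((m:ℝ)+1))]
            nlinarith [hη'0.le]
          rw [hΔN] at h2
          rw [← hLdef, h1]
          have hfin : 2*(1/(8*((m:ℝ)+1))) + 2*(1/(16*((m:ℝ)+1))) ≤ 1/(2*((m:ℝ)+1)) := by
            have hm1 : (0:ℝ) < (m:ℝ)+1 := by positivity
            have e : 1/(2*((m:ℝ)+1)) - (2*(1/(8*((m:ℝ)+1))) + 2*(1/(16*((m:ℝ)+1))))
                = 1/(8*((m:ℝ)+1)) := by
              field_simp
              ring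
            have hp : (0:ℝ) < 1/(8*((m:ℝ)+1)) := by positivity
            linarith
          linarith
  -- extract at k = T+1
  set T : ℕ := ⌈2*((n:ℝ)+1)/Δ⌉₊ with hT
  obtain ⟨w, s, η, μ', D, l, hw, hη, hμ', hμ'half, hcov, hx, hy, hmass, hD0, hDb,
    hCK, hKC, hΦ⟩ := IND (T + 1)
  refine ⟨w, s, η, l, hw, hη, hcov, hx, ⟨μ', hμ'.le, hμ'half, hy⟩, ?_, ?_, ?_⟩
  · intro p hp
    obtain ⟨p₂, hp₂, hd⟩ := hCK p hp
    refine ⟨p₂, hp₂, le_trans hd ?_⟩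
    have h2k : (0:ℝ) < 2^(T+1) := by positivity
    have : 0 < ε/(8*2^(T+1)) := by positivity
    linarith
  · intro p hp
    obtain ⟨p₂, hp₂, hd⟩ := hKC p hp
    refine ⟨p₂, hp₂, le_trans hd ?_⟩
    have h2k : (0:ℝ) < 2^(T+1) := by positivity
    have : 0 < ε/(8*2^(T+1)) := by positivity
    linarith
  · intro u hu hu1
    obtain ⟨j, hjT, hjb⟩ := slope_net hΔ0 (n:ℝ) (by positivity) hu hu1
    exact hΦ u hu j hjT hjb

/-! ### The open dense sets -/

def USet (n m : ℕ) : Set (NonemptyCompacts Plane) :=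
  {K | ∃ η > 0, ∀ u : Plane, ‖u‖ = 1 → 1/((n:ℝ)+1) ≤ |u 1| →
    volume (orthProj u (thickening η (K : Set Plane))) ≤ ENNReal.ofReal (1/(2*((m:ℝ)+1)))}

lemma isOpen_USet (n m : ℕ) : IsOpen (USet n m) := by
  rw [Metric.isOpen_iff]
  rintro K ⟨η, hη, hK⟩
  refine ⟨η/2, by linarith, ?_⟩
  intro K' hK'
  rw [mem_ball, NonemptyCompacts.dist_eq] at hK'
  refine ⟨η/2, by linarith, ?_⟩
  intro u hu hu1
  have hsub : thickening (η/2) (K' : Set Plane) ⊆ thickening η (K : Set Plane) := by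
    intro x hx
    obtain ⟨y, hy, hxy⟩ := mem_thickening_iff.1 hx
    have hfin : EMetric.hausdorffEdist (K' : Set Plane) (K : Set Plane) ≠ ⊤ :=
      hausdorffEdist_ne_top_of_nonempty_of_bounded K'.nonempty K.nonempty
        K'.isCompact.isBounded K.isCompact.isBounded
    obtain ⟨z, hz, hyz⟩ := exists_dist_lt_of_hausdorffDist_lt hy hK' hfin
    exact mem_thickening_iff.2 ⟨z, hz, by
      calc dist x z ≤ dist x y + dist y z := dist_triangle _ _ _
        _ < η/2 + η/2 := add_lt_add hxy hyz
        _ = η := by ring⟩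
  exact le_trans (measure_mono (image_mono hsub)) (hK u hu hu1)

def USub (n m : ℕ) : Set specialCompacts :=
  {K : specialCompacts | (K : NonemptyCompacts Plane) ∈ USet n m}

lemma isOpen_USub (n m : ℕ) : IsOpen (USub n m) :=
  (isOpen_USet n m).preimage continuous_subtype_val

lemma dense_USub (n m : ℕ) : Dense (USub n m) := by
  rw [Metric.dense_iff]
  rintro KS r hr
  obtain ⟨hKsub, hKx⟩ := KS.2
  obtain ⟨w, s, η, l, hw, hη, hcov, hx, ⟨μ', hμ'0, hμ'half, hy⟩, hCK, hKC, hproj⟩ :=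
    density_core (KS.1 : Set Plane) hKsub hKx hr n m
  have hne : (confSet w s l).Nonempty := confSet_nonempty hw.le hcov
  set C : NonemptyCompacts Plane := ⟨⟨confSet w s l, confSet_isCompact w s l⟩, hne⟩ with hC
  have hCmem : C ∈ specialCompacts := by
    constructor
    · exact confSet_subset_unitSq hμ'0 hμ'half hx hy
    · exact confSet_xproj hw.le hcov hx
  have hdist : dist (⟨C, hCmem⟩ : specialCompacts) KS < r := by
    rw [Subtype.dist_eq, NonemptyCompacts.dist_eq]
    have h1 : hausdorffDist (C : Set Plane) (KS.1 : Set Plane) ≤ r/2 := by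
      apply hausdorffDist_le_of_infDist (by linarith)
      · intro p hp
        obtain ⟨p₂, hp₂, hd⟩ := hCK p hp
        exact le_trans (infDist_le_dist_of_mem hp₂) hd
      · intro p hp
        obtain ⟨p₂, hp₂, hd⟩ := hKC p hp
        exact le_trans (infDist_le_dist_of_mem hp₂) hd
    linarith
  refine ⟨⟨C, hCmem⟩, mem_inter (mem_ball.2 hdist) ?_⟩
  refine ⟨η, hη, ?_⟩
  intro u hu hu1
  calc volume (orthProj u (thickening η (C : Set Plane)))
      ≤ volume (cthickening η (orthProj u (C : Set Plane))) :=
        measure_mono (orthProj_thickening_subset hu η _)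
    _ ≤ ENNReal.ofReal (1/(2*((m:ℝ)+1))) := hproj u hu hu1


/-- A typical element of `𝒞` has orthogonal projections of Lebesgue measure zero in every
non-vertical direction (i.e. onto the line spanned by every unit vector not parallel to
`(1,0)`). -/
theorem typical_projections_null :
    {K : specialCompacts |
        ∀ u : Plane, ‖u‖ = 1 → (¬ ∃ t : ℝ, u = t • pt 1 0) →
          volume (orthProj u (K.1 : Set Plane)) = 0} ∈ residual specialCompacts := by
  have hres : ∀ p : ℕ × ℕ, USub p.1 p.2 ∈ residual specialCompacts := fun p =>
    residual_of_dense_open (isOpen_USub p.1 p.2) (dense_USub p.1 p.2)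
  have hinter : (⋂ p : ℕ × ℕ, USub p.1 p.2) ∈ residual specialCompacts :=
    countable_iInter_mem.2 hres
  refine Filter.mem_of_superset hinter ?_
  intro K hK
  simp only [mem_iInter] at hK
  intro u hu hupar
  -- u is not vertical
  have hu1 : u 1 ≠ 0 := by
    intro h10
    apply hupar
    refine ⟨u 0, ?_⟩
    ext i
    fin_cases i
    · simp [PiLp.smul_apply, pt_apply_zero, smul_eq_mul]
    · simp [PiLp.smul_apply, pt_apply_one, smul_eq_mul, h10]
  have hb0 : 0 < |u 1| := abs_pos.2 hu1
  set n : ℕ := ⌈1/|u 1|⌉₊ with hn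
  have hn1 : 1/((n:ℝ)+1) ≤ |u 1| := by
    have h1 : 1/|u 1| ≤ (n:ℝ) + 1 := le_trans (Nat.le_ceil _) (by linarith)
    rw [div_le_iff₀ hb0] at h1
    rw [div_le_iff₀ (by positivity : (0:ℝ) < (n:ℝ)+1)]
    nlinarith
  -- the measure is at most 1/(2(m+1)) for every m
  have hle : ∀ m : ℕ, volume (orthProj u (K.1 : Set Plane))
      ≤ ENNReal.ofReal (1/(2*((m:ℝ)+1))) := by
    intro m
    obtain ⟨η, hη, hbound⟩ := hK (n, m)
    refine le_trans (measure_mono (image_mono (self_subset_thickening hη _))) ?_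
    exact hbound u hu hn1
  -- conclude
  have htend : Filter.Tendsto (fun m : ℕ => ENNReal.ofReal (1/(2*((m:ℝ)+1))))
      Filter.atTop (nhds 0) := by
    have h1 : Filter.Tendsto (fun m : ℕ => 1/(2*((m:ℝ)+1))) Filter.atTop (nhds 0) := by
      have h2 := tendsto_one_div_add_atTop_nhds_zero_nat.const_mul (1/2 : ℝ)
      rw [mul_zero] at h2
      convert h2 using 2 with m
      field_simp
    have h3 := ENNReal.tendsto_ofReal h1
    rwa [ENNReal.ofReal_zero] at h3
  exact le_antisymm (ge_of_tendsto' htend hle) zero_le
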